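/- arXiv:1803.08951 — 3 statements merged into one kernel-verified Lean document; each statement's English description precedes it below -/
import Mathlib

section
/- Let c ≤ d be reals, σ : [c,d] → ℝ continuous and strictly positive, and q : [c,d] → ℝ continuous. For γ ∈ ℝ define f_γ(x) := γ·σ(x)² − q(x). Suppose x̲ ∈ [c,d] is the unique minimizer of σ over [c,d], and suppose the limit ℓ := lim_{x→x̲} (q(x) − q(x̲))/(σ(x) − σ(x̲)) exists and is finite. Then there exists M > 0 such that for every γ > M, f_γ attains its minimum over [c,d] at x̲. -/
open Set Filter

theorem stmt_0 (c d : ℝ) (hcd : c ≤ d) (σ q : ℝ → ℝ)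
    (hσc : ContinuousOn σ (Icc c d)) (hσpos : ∀ x ∈ Icc c d, 0 < σ x)
    (hqc : ContinuousOn q (Icc c d))
    (xm : ℝ) (hxm : xm ∈ Icc c d)
    (hmin : ∀ x ∈ Icc c d, x ≠ xm → σ xm < σ x)
    (ℓ : ℝ)
    (hlim : Tendsto (fun x => (q x - q xm) / (σ x - σ xm))
      (nhdsWithin xm (Icc c d \ {xm})) (nhds ℓ)) :
    ∃ M > 0, ∀ γ > M, ∀ x ∈ Icc c d,
      γ * (σ xm)^2 - q xm ≤ γ * (σ x)^2 - q x := by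
  -- get open nbhd where ratio < ℓ + 1
  obtain ⟨U, hUo, hxU, hU⟩ : ∃ U, IsOpen U ∧ xm ∈ U ∧
      ∀ x ∈ U ∩ (Icc c d \ {xm}), (q x - q xm) / (σ x - σ xm) < ℓ + 1 := by
    have h := hlim (Iio_mem_nhds (lt_add_one ℓ))
    rw [mem_map, mem_nhdsWithin] at h
    obtain ⟨U, hUo, hxU, hU⟩ := h
    exact ⟨U, hUo, hxU, fun x hx => hU hx⟩
  -- δ lower bound for σ x - σ xm away from U
  obtain ⟨δ, hδpos, hδ⟩ : ∃ δ > 0, ∀ x ∈ Icc c d \ U, δ ≤ σ x - σ xm := by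
    rcases eq_empty_or_nonempty (Icc c d \ U) with h | h
    · exact ⟨1, one_pos, by simp [h]⟩
    · obtain ⟨x0, hx0, hmin0⟩ :=
        (isCompact_Icc.diff hUo).exists_isMinOn h (hσc.mono diff_subset)
      have hx0m : σ xm < σ x0 := hmin x0 hx0.1 (by rintro rfl; exact hx0.2 hxU)
      exact ⟨σ x0 - σ xm, by linarith, fun x hx => by linarith [isMinOn_iff.1 hmin0 x hx]⟩
  -- max of q
  obtain ⟨xq, hxq, hQ⟩ := isCompact_Icc.exists_isMaxOn ⟨xm, hxm⟩ hqc
  set B : ℝ := max (ℓ + 1) ((q xq - q xm) / δ) with hB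
  have hσm : 0 < σ xm := hσpos xm hxm
  have hBnn : 0 ≤ B := le_trans (div_nonneg (by linarith [isMaxOn_iff.1 hQ xm hxm]) hδpos.le)
    (le_max_right _ _)
  refine ⟨max (B / (2 * σ xm)) 1, lt_max_of_lt_right one_pos, fun γ hγ x hx => ?_⟩
  have hγ1 : 1 < γ := lt_of_le_of_lt (le_max_right _ _) hγ
  have hγB : B < γ * (2 * σ xm) := by
    have h1 : B / (2 * σ xm) < γ := lt_of_le_of_lt (le_max_left _ _) hγ
    rwa [div_lt_iff₀ (by linarith)] at h1
  rcases eq_or_ne x xm with rfl | hne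
  · exact le_refl _
  have hσx : σ xm < σ x := hmin x hx hne
  have key : q x - q xm ≤ B * (σ x - σ xm) := by
    by_cases hxUmem : x ∈ U
    · have hr := hU x ⟨hxUmem, hx, hne⟩
      have := (div_le_iff₀ (by linarith : (0:ℝ) < σ x - σ xm)).1
        (le_trans hr.le (le_max_left _ _ : ℓ + 1 ≤ B))
      linarith
    · have hδx := hδ x ⟨hx, hxUmem⟩
      have h1 : q x - q xm ≤ q xq - q xm := by linarith [isMaxOn_iff.1 hQ x hx]
      have h2 : q xq - q xm ≤ B * δ := by
        have := (div_le_iff₀ hδpos).1 (le_max_right (ℓ + 1) ((q xq - q xm) / δ))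
        linarith
      nlinarith
  have h3 : B * (σ x - σ xm) ≤ γ * (2 * σ xm) * (σ x - σ xm) :=
    mul_le_mul_of_nonneg_right hγB.le (by linarith)
  have h4 : γ * (2 * σ xm) * (σ x - σ xm) ≤ γ * (σ x ^ 2 - σ xm ^ 2) := by
    nlinarith [sq_nonneg (σ x - σ xm)]
  linarith
end

section
/- Let c ≤ d be reals, σ : [c,d] → ℝ continuous and strictly positive, and q : [c,d] → ℝ continuous. For γ ∈ ℝ define f_γ(x) := γ·σ(x)² − q(x). Suppose x̄ ∈ [c,d] is the unique maximizer of σ over [c,d], and suppose the limit L := lim_{x→x̄} (q(x) − q(x̄))/(σ(x) − σ(x̄)) exists and is finite. Then there exists m < 0 such that for every γ < m, f_γ attains its minimum over [c,d] at x̄. -/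
open Set Filter

theorem stmt_1 (c d : ℝ) (hcd : c ≤ d) (σ q : ℝ → ℝ)
    (hσc : ContinuousOn σ (Icc c d)) (hσpos : ∀ x ∈ Icc c d, 0 < σ x)
    (hqc : ContinuousOn q (Icc c d))
    (xM : ℝ) (hxM : xM ∈ Icc c d)
    (hmax : ∀ x ∈ Icc c d, x ≠ xM → σ x < σ xM)
    (L : ℝ)
    (hlim : Tendsto (fun x => (q x - q xM) / (σ x - σ xM))
      (nhdsWithin xM (Icc c d \ {xM})) (nhds L)) :
    ∃ m < (0 : ℝ), ∀ γ < m, ∀ x ∈ Icc c d,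
      γ * (σ xM)^2 - q xM ≤ γ * (σ x)^2 - q x := by
  have hcompact : IsCompact (Icc c d) := isCompact_Icc
  have hσM : 0 < σ xM := hσpos xM hxM
  rw [Metric.tendsto_nhdsWithin_nhds] at hlim
  obtain ⟨δ, hδ, hδball⟩ := hlim 1 one_pos
  -- bound q - q xM on the interval
  obtain ⟨C, hC⟩ : ∃ C, ∀ x ∈ Icc c d, |q x - q xM| ≤ C := by
    obtain ⟨C, hC⟩ := hcompact.exists_bound_of_continuousOn
      (f := fun x => q x - q xM) (hqc.sub continuousOn_const)
    exact ⟨C, fun x hx => hC x hx⟩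
  have hC0 : 0 ≤ C := le_trans (abs_nonneg _) (hC xM hxM)
  -- key bound
  obtain ⟨M, hM0, hMkey⟩ : ∃ M : ℝ, 0 ≤ M ∧
      ∀ x ∈ Icc c d, |q x - q xM| ≤ M * (σ xM - σ x) := by
    set K : Set ℝ := Icc c d ∩ {x | δ ≤ |x - xM|} with hK
    have hKcomp : IsCompact K := hcompact.inter_right
      (isClosed_le continuous_const ((continuous_id.sub continuous_const).abs))
    have hnear : ∀ x ∈ Icc c d, x ≠ xM → |x - xM| < δ →
        |q x - q xM| ≤ (|L| + 1) * (σ xM - σ x) := by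
      intro x hx hne hxd
      have hσx : σ x < σ xM := hmax x hx hne
      have hmem : x ∈ Icc c d \ {xM} := ⟨hx, hne⟩
      have := hδball hmem (by simpa [Real.dist_eq] using hxd)
      rw [Real.dist_eq] at this
      have hg : |(q x - q xM) / (σ x - σ xM)| ≤ |L| + 1 := by
        have h := abs_sub_abs_le_abs_sub ((q x - q xM) / (σ x - σ xM)) L
        linarith
      have hne' : σ x - σ xM ≠ 0 := by linarith
      have : |q x - q xM| = |(q x - q xM) / (σ x - σ xM)| * |σ x - σ xM| := by
        rw [← abs_mul, div_mul_cancel₀ _ hne']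
      rw [this]
      have habs : |σ x - σ xM| = σ xM - σ x := by
        rw [abs_of_neg (by linarith)]; ring
      rw [habs]
      exact mul_le_mul_of_nonneg_right hg (by linarith)
    by_cases hKne : K.Nonempty
    · -- min of σ xM - σ on K
      obtain ⟨z, hzK, hz⟩ := hKcomp.exists_isMinOn hKne
        ((continuousOn_const.sub (hσc.mono (inter_subset_left))) :
          ContinuousOn (fun x => σ xM - σ x) K)
      have hzne : z ≠ xM := by
        intro h
        have := hzK.2
        rw [h] at this
        simp at this
        linarith
      have hε : 0 < σ xM - σ z := by
        have := hmax z hzK.1 hzne; linarith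
      refine ⟨max (|L| + 1) (C / (σ xM - σ z)), le_max_of_le_left (by positivity), ?_⟩
      intro x hx
      by_cases hxe : x = xM
      · subst hxe
        simp
      by_cases hxd : |x - xM| < δ
      · exact (hnear x hx hxe hxd).trans
          (mul_le_mul_of_nonneg_right (le_max_left _ _)
            (by have := hmax x hx hxe; linarith))
      · have hxK : x ∈ K := ⟨hx, le_of_not_gt hxd⟩
        have h1 : σ xM - σ z ≤ σ xM - σ x := hz hxK
        calc |q x - q xM| ≤ C := hC x hx
          _ = (C / (σ xM - σ z)) * (σ xM - σ z) := by field_simp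
          _ ≤ max (|L| + 1) (C / (σ xM - σ z)) * (σ xM - σ x) := by
              apply mul_le_mul (le_max_right _ _) h1 (le_of_lt hε)
              positivity
    · -- K empty: every x ≠ xM is near
      refine ⟨|L| + 1, by positivity, ?_⟩
      intro x hx
      by_cases hxe : x = xM
      · subst hxe; simp
      · have hxd : |x - xM| < δ := by
          by_contra h
          exact hKne ⟨x, hx, le_of_not_gt h⟩
        exact hnear x hx hxe hxd
  -- conclude
  refine ⟨-(M + 1) / σ xM, div_neg_of_neg_of_pos (by linarith) hσM, ?_⟩
  intro γ hγ x hx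
  by_cases hxe : x = xM
  · subst hxe; exact le_refl _
  have hσx : σ x < σ xM := hmax x hx hxe
  have hσxp : 0 < σ x := hσpos x hx
  have hγ' : γ * σ xM < -(M + 1) := by
    rw [div_eq_mul_inv] at hγ
    calc γ * σ xM < (-(M + 1) * (σ xM)⁻¹) * σ xM :=
      mul_lt_mul_of_pos_right hγ hσM
      _ = -(M + 1) := by field_simp
  have hq : q xM - q x ≥ -(M * (σ xM - σ x)) := by
    have := hC x hx
    have h2 := hMkey x hx
    have := le_abs_self (q x - q xM)
    linarith
  have hγ0 : γ < 0 := by nlinarith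
  nlinarith [mul_pos (sub_pos.2 hσx) (sub_pos.2 hσx),
    mul_le_mul_of_nonneg_left (le_of_lt hσx) (le_of_lt (neg_pos.2 hγ0)),
    mul_nonneg (le_of_lt (sub_pos.2 hσx)) (le_of_lt (neg_pos.2 hγ0)),
    mul_pos (sub_pos.2 hσx) hσxp]
end

section
/- Let c ≤ d be reals, σ : [c,d] → ℝ continuous with σ > 0, and q : [c,d] → ℝ. Let x̄ ∈ [c,d] satisfy σ(x̄) = max_{[c,d]} σ, and suppose there is M_G ≥ 0 such that |q(x) − q(x̄)| ≤ M_G · (σ(x̄) − σ(x)) for all x ∈ [c,d]. Then for every γ < −M_G/(2σ(x̲)), where σ(x̲) := min_{[c,d]} σ > 0, and every x ∈ [c,d] with σ(x) ≠ σ(x̄): γ·σ(x̄)² − q(x̄) < γ·σ(x)² − q(x). In particular x̄ minimizes x ↦ γσ(x)² − q(x) over [c,d]. -/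
open Set

theorem stmt_15 (c d : ℝ) (hcd : c ≤ d) (σ q : ℝ → ℝ)
    (hσc : ContinuousOn σ (Icc c d)) (hσpos : ∀ x ∈ Icc c d, 0 < σ x)
    (xm xM : ℝ) (hxm : xm ∈ Icc c d) (hxM : xM ∈ Icc c d)
    (hmin : ∀ x ∈ Icc c d, σ xm ≤ σ x)
    (hmax : ∀ x ∈ Icc c d, σ x ≤ σ xM)
    (MG : ℝ) (hMG : 0 ≤ MG)
    (hq : ∀ x ∈ Icc c d, |q x - q xM| ≤ MG * (σ xM - σ x)) :
    ∀ γ < -MG / (2 * σ xm),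
      (∀ x ∈ Icc c d, σ x ≠ σ xM →
        γ * (σ xM)^2 - q xM < γ * (σ x)^2 - q x) ∧
      (∀ x ∈ Icc c d, γ * (σ xM)^2 - q xM ≤ γ * (σ x)^2 - q x) := by
  intro γ hγ
  have hm : 0 < σ xm := hσpos xm hxm
  have hγ' : γ * (2 * σ xm) < -MG :=
    (lt_div_iff₀ (by positivity : (0:ℝ) < 2 * σ xm)).mp hγ
  have key : ∀ x ∈ Icc c d, σ x ≠ σ xM →
      γ * (σ xM)^2 - q xM < γ * (σ x)^2 - q x := by
    intro x hx hne
    have h1 : σ x < σ xM := lt_of_le_of_ne (hmax x hx) hne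
    have h2 : σ xm ≤ σ x := hmin x hx
    have h3 : σ xm ≤ σ xM := hmin xM hxM
    have hq' := abs_le.mp (hq x hx)
    have hγneg : γ < 0 := by nlinarith
    have hA : γ * (σ xM + σ x) ≤ γ * (2 * σ xm) := by nlinarith
    have hB : γ * (σ xM + σ x) * (σ xM - σ x) ≤ γ * (2 * σ xm) * (σ xM - σ x) :=
      mul_le_mul_of_nonneg_right hA (by linarith)
    have hC : γ * (2 * σ xm) * (σ xM - σ x) < -MG * (σ xM - σ x) :=
      mul_lt_mul_of_pos_right hγ' (by linarith)
    nlinarith [hq'.1, hB, hC]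
  refine ⟨key, fun x hx => ?_⟩
  by_cases hne : σ x = σ xM
  · have hq' := hq x hx
    rw [hne] at hq' ⊢
    have : |q x - q xM| ≤ 0 := by simpa using hq'
    have h2 := abs_le.mp this
    linarith [h2.1, h2.2]
  · exact (key x hx hne).le
end
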